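/- Any generating set of the free group of rank g consisting of exactly g elements is a free basis. -/

import Mathlib

namespace Stmt12Aux

open Equiv FreeGroup

/-- Auxiliary embedding of `ℕ` (truncated at `n`) into `Fin (n+1)`. -/
def fn (n j : ℕ) : Fin (n + 1) := ⟨min j n, by omega⟩

lemma fn_inj {n a b : ℕ} (ha : a ≤ n) (hb : b ≤ n) (h : fn n a = fn n b) : a = b := by
  simpa [fn, Nat.min_eq_left ha, Nat.min_eq_left hb, Fin.ext_iff] using h

/-- The transposition `(j, j+1)` in `Perm (Fin (n+1))`. -/
def sw (n j : ℕ) : Equiv.Perm (Fin (n + 1)) := Equiv.swap (fn n j) (fn n (j + 1))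

/-- Product of adjacent transpositions indexed by a list. -/
def prodSw (n : ℕ) (js : List ℕ) : Equiv.Perm (Fin (n + 1)) := (js.map (sw n)).prod

lemma prodSw_fix {n : ℕ} {js : List ℕ} {x : ℕ} (hx : x ≤ n)
    (h : ∀ k ∈ js, k < n ∧ k ≠ x ∧ k + 1 ≠ x) : prodSw n js (fn n x) = fn n x := by
  induction js with
  | nil => simp [prodSw]
  | cons a t ih =>
    obtain ⟨ha, ha1, ha2⟩ := h a (by simp)
    have ht : prodSw n t (fn n x) = fn n x := ih fun k hk => h k (by simp [hk])
    have : prodSw n (a :: t) (fn n x) = sw n a (prodSw n t (fn n x)) := by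
      simp [prodSw, Equiv.Perm.mul_apply]
    rw [this, ht, sw]
    have hxa : fn n x ≠ fn n a := fun hh => ha1 (fn_inj hx (by omega) hh).symm
    have hxa1 : fn n x ≠ fn n (a + 1) := fun hh => ha2 (fn_inj hx (by omega) hh).symm
    exact Equiv.swap_apply_of_ne_of_ne hxa hxa1

lemma prodSw_up {n : ℕ} {js : List ℕ} (hs : js.Pairwise (· < ·))
    (hlt : ∀ k ∈ js, k < n) {j : ℕ} (hj : j ∈ js) :
    prodSw n js (fn n j) = fn n (j + 1) := by
  induction js with
  | nil => simp at hj
  | cons a t ih =>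
    have hcons : prodSw n (a :: t) (fn n j) = sw n a (prodSw n t (fn n j)) := by
      simp [prodSw, Equiv.Perm.mul_apply]
    have ha : a < n := hlt a (by simp)
    rcases List.mem_cons.1 hj with rfl | hjt
    · have ht : prodSw n t (fn n j) = fn n j := by
        refine prodSw_fix (by omega) fun k hk => ?_
        have := (List.pairwise_cons.1 hs).1 k hk
        exact ⟨hlt k (by simp [hk]), by omega, by omega⟩
      rw [hcons, ht, sw]
      exact Equiv.swap_apply_left _ _
    · have haj : a < j := (List.pairwise_cons.1 hs).1 j hjt
      have hjn : j < n := hlt j (by simp [hjt])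
      have ht : prodSw n t (fn n j) = fn n (j + 1) :=
        ih (List.pairwise_cons.1 hs).2 (fun k hk => hlt k (by simp [hk])) hjt
      rw [hcons, ht, sw]
      exact Equiv.swap_apply_of_ne_of_ne
        (fun hh => by have := fn_inj (a := j + 1) (b := a) (by omega) (by omega) hh; omega)
        (fun hh => by have := fn_inj (a := j + 1) (b := a + 1) (by omega) (by omega) hh; omega)

variable {g : ℕ}

/-- Positions in the word `M` carrying the letter `a`. -/
def pos (M : List (Fin g × Bool)) (a : Fin g × Bool) : List ℕ :=
  (List.range M.length).filter fun j => M[j]? = some a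

lemma mem_pos {M : List (Fin g × Bool)} {a : Fin g × Bool} {j : ℕ} :
    j ∈ pos M a ↔ j < M.length ∧ M[j]? = some a := by
  simp [pos, List.mem_filter, List.mem_range]

lemma pos_pairwise {M : List (Fin g × Bool)} {a : Fin g × Bool} :
    (pos M a).Pairwise (· < ·) :=
  List.Pairwise.sublist List.filter_sublist List.pairwise_lt_range

/-- The permutation associated with a generator `i`, built from the word `M`. -/
def sigmaP (n : ℕ) (M : List (Fin g × Bool)) (i : Fin g) : Equiv.Perm (Fin (n + 1)) :=
  prodSw n (pos M (i, true)) * (prodSw n (pos M (i, false)))⁻¹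

lemma getElem_congr' {α : Type*} (l : List α) {i j : ℕ} (h : i = j) (hi : i < l.length) :
    l[i]'hi = l[j]'(h ▸ hi) := by subst h; rfl

/-- No cancelling adjacent pair in a reduced word. -/
lemma no_cancel {L : List (Fin g × Bool)} (hL : FreeGroup.reduce L = L)
    {k : ℕ} (hk : k + 1 < L.length) {x : Fin g} {b : Bool}
    (h1 : L[k] = (x, b)) (h2 : L[k + 1] = (x, !b)) : False := by
  refine FreeGroup.reduce.not (L₁ := L) (L₂ := L.take k) (L₃ := L.drop (k + 2))
    (x := x) (b := b) ?_
  rw [hL]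
  conv_lhs => rw [← List.take_append_drop k L]
  rw [List.drop_eq_getElem_cons (by omega), List.drop_eq_getElem_cons (by omega), h1, h2]

/-- Key adjacency fact on `M = L.reverse`. -/
lemma no_cancel_rev {L : List (Fin g × Bool)} (hL : FreeGroup.reduce L = L)
    {j : ℕ} (hj : j + 1 < L.length) {x : Fin g} {b : Bool}
    (h1 : L.reverse[j]'(by simpa using by omega) = (x, b))
    (h2 : L.reverse[j + 1]'(by simpa using hj) = (x, !b)) : False := by
  have hlen : L.reverse.length = L.length := List.length_reverse
  have e1 : L[L.length - 1 - j]'(by omega) = (x, b) := by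
    rw [← List.getElem_reverse]; · exact h1
  have e2 : L[L.length - 1 - (j + 1)]'(by omega) = (x, !b) := by
    rw [← List.getElem_reverse]; · exact h2
  have hkey : L.length - 1 - (j + 1) + 1 = L.length - 1 - j := by omega
  refine no_cancel hL (k := L.length - 1 - (j + 1)) (by omega) (x := x) (b := !b) e2 ?_
  rw [getElem_congr' L hkey (by omega), e1, Bool.not_not]

/-- The crucial pointwise computation. -/
lemma step_eval {L : List (Fin g × Bool)} (hL : FreeGroup.reduce L = L)
    {j : ℕ} (hj : j < L.length) :
    (cond (L.reverse[j]'(by simpa using hj)).2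
        (sigmaP L.length L.reverse (L.reverse[j]'(by simpa using hj)).1)
        (sigmaP L.length L.reverse (L.reverse[j]'(by simpa using hj)).1)⁻¹)
      (fn L.length j) = fn L.length (j + 1) := by
  set n := L.length with hn
  set M := L.reverse with hM
  have hlen : M.length = n := List.length_reverse
  set i := (M[j]'(by omega)).1 with hi
  have hjM : j < M.length := by omega
  have hposlt : ∀ a, ∀ k ∈ pos M a, k < n := fun a k hk => by
    have := (mem_pos.1 hk).1; omega
  have hmemj : ∀ b : Bool, (M[j]'hjM).2 = b → j ∈ pos M (i, b) := by
    intro b hb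
    refine mem_pos.2 ⟨hjM, ?_⟩
    rw [List.getElem?_eq_getElem hjM]
    exact congrArg some (Prod.ext hi.symm hb)
  -- if k has letter (i, b') with sign opposite to position j's sign, then k ≠ j ± issues
  rcases hb : (M[j]'hjM).2 with _ | _
  · -- sign false : goal is (sigmaP n M i)⁻¹ (fn n j) = fn n (j+1),
    -- i.e. sigmaP n M i (fn n (j+1)) = fn n j
    have hjmem : j ∈ pos M (i, false) := hmemj false hb
    have hFi : prodSw n (pos M (i, false)) (fn n j) = fn n (j + 1) :=
      prodSw_up pos_pairwise (hposlt _) hjmem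
    have hT : prodSw n (pos M (i, true)) (fn n j) = fn n j := by
      refine prodSw_fix (by omega) fun k hk => ?_
      obtain ⟨hk1, hk2⟩ := mem_pos.1 hk
      have hkget : M[k]'hk1 = (i, true) := by
        have := hk2; rwa [List.getElem?_eq_getElem hk1, Option.some_inj] at this
      refine ⟨by omega, ?_, ?_⟩
      · intro hkj0
        have : M[j]'hjM = (i, true) := by
          rw [← getElem_congr' M hkj0 hk1]; exact hkget
        rw [this] at hb; simp at hb
      · rintro hkj
        -- k + 1 = j : M[k] = (i,true), M[k+1] = (i,false) : cancelling pair
        have hMj : M[k + 1]'(by omega) = (i, !true) := by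
          have : M[j]'hjM = (i, false) := Prod.ext hi.symm hb
          simpa [hkj] using this
        exact no_cancel_rev hL (by omega) hkget hMj
    have hsig : sigmaP n M i (fn n (j + 1)) = fn n j := by
      have h1 : (prodSw n (pos M (i, false)))⁻¹ (fn n (j + 1)) = fn n j := by
        rw [← hFi, Equiv.Perm.inv_def, Equiv.symm_apply_apply]
      simp only [sigmaP, Equiv.Perm.mul_apply, h1, hT]
    simp only [cond_false]
    rw [← hsig, Equiv.Perm.inv_def, Equiv.symm_apply_apply]
  · -- sign true : goal is sigmaP n M i (fn n j) = fn n (j+1)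
    have hjmem : j ∈ pos M (i, true) := hmemj true hb
    have hFi : prodSw n (pos M (i, false)) (fn n j) = fn n j := by
      refine prodSw_fix (by omega) fun k hk => ?_
      obtain ⟨hk1, hk2⟩ := mem_pos.1 hk
      have hkget : M[k]'hk1 = (i, false) := by
        have := hk2; rwa [List.getElem?_eq_getElem hk1, Option.some_inj] at this
      refine ⟨by omega, ?_, ?_⟩
      · intro hkj0
        have : M[j]'hjM = (i, false) := by
          rw [← getElem_congr' M hkj0 hk1]; exact hkget
        rw [this] at hb; simp at hb
      · rintro hkj
        -- k + 1 = j : M[k] = (i,false), M[k+1] = (i,true) : cancelling pair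
        have hMj : M[k + 1]'(by omega) = (i, !false) := by
          have : M[j]'hjM = (i, true) := Prod.ext hi.symm hb
          simpa [hkj] using this
        exact no_cancel_rev hL (by omega) hkget hMj
    have hT : prodSw n (pos M (i, true)) (fn n j) = fn n (j + 1) :=
      prodSw_up pos_pairwise (hposlt _) hjmem
    have h1 : (prodSw n (pos M (i, false)))⁻¹ (fn n j) = fn n j := by
      conv_lhs => rw [← hFi]
      rw [Equiv.Perm.inv_def, Equiv.symm_apply_apply]
    simp only [cond_true, sigmaP, Equiv.Perm.mul_apply, h1, hT]
    exact (congrArg (prodSw n (pos M (i, true))) h1).trans hT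

/-- Evaluation of the product of suffixes. -/
lemma suffix_eval {L : List (Fin g × Bool)} (hL : FreeGroup.reduce L = L)
    (s : ℕ) (hs : s ≤ L.length) :
    ((L.drop (L.length - s)).map fun x =>
        cond x.2 (sigmaP L.length L.reverse x.1) (sigmaP L.length L.reverse x.1)⁻¹).prod
      (fn L.length 0) = fn L.length s := by
  induction s with
  | zero => simp
  | succ s ih =>
    have hlt : L.length - (s + 1) < L.length := by omega
    have hidx : L.length - (s + 1) + 1 = L.length - s := by omega
    have hdrop : L.drop (L.length - (s + 1)) =
        L[L.length - (s + 1)]'hlt :: L.drop (L.length - s) := by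
      rw [List.drop_eq_getElem_cons hlt, hidx]
    rw [hdrop, List.map_cons, List.prod_cons, Equiv.Perm.mul_apply, ih (by omega)]
    have hrev : L[L.length - (s + 1)]'hlt = L.reverse[s]'(by simpa using by omega) := by
      rw [List.getElem_reverse]
      congr 1
      omega
    rw [hrev]
    exact step_eval hL (by omega)

/-- Residual finiteness of finitely generated free groups. -/
lemma residually_finite {g : ℕ} (w : FreeGroup (Fin g)) (hw : w ≠ 1) :
    ∃ (m : ℕ) (f : FreeGroup (Fin g) →* Equiv.Perm (Fin m)), f w ≠ 1 := by
  classical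
  set L := w.toWord with hLdef
  have hL : FreeGroup.reduce L = L := FreeGroup.reduce_toWord w
  have hmk : FreeGroup.mk L = w := FreeGroup.mk_toWord
  have hne : L ≠ [] := by
    intro h
    exact hw (by rw [← hmk, h]; rfl)
  have hlen : 0 < L.length := List.length_pos_iff.2 hne
  refine ⟨L.length + 1, FreeGroup.lift fun i => sigmaP L.length L.reverse i, ?_⟩
  intro hone
  have heval : (FreeGroup.lift fun i => sigmaP L.length L.reverse i) w (fn L.length 0) =
      fn L.length L.length := by
    rw [← hmk, FreeGroup.lift_mk]
    have := suffix_eval hL L.length (le_refl _)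
    simpa using this
  rw [hone] at heval
  simp only [Equiv.Perm.one_apply] at heval
  have := fn_inj (by omega) (le_refl _) heval
  omega

/-- Finitely generated free groups are Hopfian. -/
lemma hopfian {g : ℕ} (φ : FreeGroup (Fin g) →* FreeGroup (Fin g))
    (hφ : Function.Surjective φ) : Function.Injective φ := by
  classical
  rw [← MonoidHom.ker_eq_bot_iff, eq_bot_iff]
  intro w hw
  simp only [Subgroup.mem_bot]
  by_contra hne
  obtain ⟨m, f, hf⟩ := residually_finite w hne
  -- counting argument
  set T : (Fin g → Equiv.Perm (Fin m)) → (Fin g → Equiv.Perm (Fin m)) :=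
    fun d i => FreeGroup.lift d (φ (FreeGroup.of i)) with hT
  have hlift : ∀ d, FreeGroup.lift (T d) = (FreeGroup.lift d).comp φ := by
    intro d
    apply FreeGroup.ext_hom
    intro a
    simp [hT, FreeGroup.lift_apply_of]
  have hTinj : Function.Injective T := by
    intro d d' h
    have h2 : (FreeGroup.lift d).comp φ = (FreeGroup.lift d').comp φ := by
      rw [← hlift, ← hlift, h]
    have h3 : FreeGroup.lift d = FreeGroup.lift d' := by
      apply MonoidHom.ext
      intro x
      obtain ⟨y, rfl⟩ := hφ x
      exact DFunLike.congr_fun h2 y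
    funext i
    have := DFunLike.congr_fun h3 (FreeGroup.of i)
    simpa [FreeGroup.lift_apply_of] using this
  have hTsurj : Function.Surjective T := Finite.surjective_of_injective hTinj
  obtain ⟨d', hd'⟩ := hTsurj fun i => f (FreeGroup.of i)
  have hfeq : (FreeGroup.lift d').comp φ = f := by
    rw [← hlift, hd']
    apply FreeGroup.ext_hom
    intro a
    simp [FreeGroup.lift_apply_of]
  have : f w = 1 := by
    rw [← hfeq]
    simp only [MonoidHom.comp_apply]
    rw [show φ w = 1 from hw]
    exact map_one _
  exact hf this

end Stmt12Aux

/-- Any generating set of the free group of rank `g` consisting of exactly `g` elements is a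
free basis: the inclusion extends to an isomorphism from the free group on that set. -/
theorem stmt_12 (g : ℕ) (S : Set (FreeGroup (Fin g)))
    (hcard : Nat.card S = g) (hgen : Subgroup.closure S = ⊤) :
    ∃ e : FreeGroup S ≃* FreeGroup (Fin g),
      ∀ x : S, e (FreeGroup.of x) = (x : FreeGroup (Fin g)) := by
  classical
  -- S is finite
  have hfin : Finite S := by
    rcases Nat.eq_zero_or_pos g with hg | hg
    · have : ∀ w : FreeGroup (Fin g), w = 1 := by
        intro w
        have : w.toWord = [] := by
          rcases h : w.toWord with _ | ⟨⟨a, b⟩, t⟩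
          · rfl
          · exact absurd a.2 (by omega)
        exact FreeGroup.toWord_eq_nil_iff.1 this
      have : Subsingleton (FreeGroup (Fin g)) := ⟨fun a b => by rw [this a, this b]⟩
      exact Finite.Set.subset _ (Set.subset_univ S)
    · have hne : Nat.card S ≠ 0 := by omega
      have h2 : ¬(IsEmpty (↥S) ∨ Infinite (↥S)) := fun h => hne (Nat.card_eq_zero.2 h)
      push_neg at h2
      exact h2.2
  -- equivalence S ≃ Fin g
  have hcard2 : Nat.card S = Nat.card (Fin g) := by simp [hcard]
  obtain ⟨β⟩ : Nonempty (S ≃ Fin g) := Finite.card_eq.1 hcard2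
  -- the natural map and its surjectivity
  set ι : FreeGroup S →* FreeGroup (Fin g) := FreeGroup.lift Subtype.val with hι
  have hsurj : Function.Surjective ι := by
    rw [← MonoidHom.range_eq_top]
    rw [eq_top_iff, ← hgen]
    rw [Subgroup.closure_le]
    intro x hx
    exact ⟨FreeGroup.of ⟨x, hx⟩, FreeGroup.lift_apply_of⟩
  -- Hopficity gives injectivity
  set ψ : FreeGroup (Fin g) →* FreeGroup S := (FreeGroup.freeGroupCongr β.symm).toMonoidHom
  have hψ : Function.Bijective ψ := (FreeGroup.freeGroupCongr β.symm).bijective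
  have hinjcomp : Function.Injective (ι.comp ψ) :=
    Stmt12Aux.hopfian (ι.comp ψ) (hsurj.comp hψ.2)
  have hinj : Function.Injective ι := by
    intro a b hab
    obtain ⟨a', rfl⟩ := hψ.2 a
    obtain ⟨b', rfl⟩ := hψ.2 b
    exact congrArg ψ (hinjcomp hab)
  refine ⟨MulEquiv.ofBijective ι ⟨hinj, hsurj⟩, fun x => ?_⟩
  simp [MulEquiv.ofBijective, hι, FreeGroup.lift_apply_of]
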